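/- If there exists a nonempty antichain Λ in (Φ⁺, ≤) with Int_C(Λ) = ∅ (no point of the open dominant chamber satisfies (v,β)=1 for all β ∈ Λ), then there exists an increasing set I ⊆ Φ⁺ such that the region R_I = {v ∈ C : (v,β) > 1 for all β ∈ I and (v,γ) < 1 for all γ ∈ Φ⁺\I} is empty. -/

import Mathlib

open RealInnerProductSpace

variable {V : Type*} [NormedAddCommGroup V] [InnerProductSpace ℝ V]

/-- The root order: `β ≤ γ` iff `γ - β` is a nonnegative real combination of simple roots. -/
def rle {n : ℕ} (α : Fin n → V) (β γ : V) : Prop :=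
  ∃ c : Fin n → ℝ, (∀ i, 0 ≤ c i) ∧ γ - β = ∑ i, c i • α i

/-- The open dominant chamber. -/
def chamber {n : ℕ} (α : Fin n → V) : Set V :=
  {v | ∀ i, 0 < ⟪v, α i⟫}

/-- Antichain in the root order: pairwise incomparable. -/
def RootAntichain {n : ℕ} (α : Fin n → V) (Λ : Set V) : Prop :=
  ∀ β ∈ Λ, ∀ γ ∈ Λ, (rle α β γ ∨ rle α γ β) → β = γ

/-- Increasing set (dual order ideal) in the positive root poset. -/
def IncreasingIn {n : ℕ} (α : Fin n → V) (Φpos I : Set V) : Prop :=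
  ∀ β ∈ I, ∀ γ ∈ Φpos, rle α β γ → γ ∈ I

/-- Minimal elements of a set in the root order. -/
def rminimals {n : ℕ} (α : Fin n → V) (I : Set V) : Set V :=
  {β ∈ I | ∀ γ ∈ I, rle α γ β → γ = β}

/-- Maximal elements of a set in the root order. -/
def rmaximals {n : ℕ} (α : Fin n → V) (S : Set V) : Set V :=
  {β ∈ S | ∀ γ ∈ S, rle α β γ → γ = β}

/-- The region `R_I` determined by an increasing set `I`. -/
def regionOf {n : ℕ} (α : Fin n → V) (Φpos I : Set V) : Set V :=
  {v ∈ chamber α | (∀ β ∈ I, 1 < ⟪v, β⟫) ∧ ∀ γ ∈ Φpos \ I, ⟪v, γ⟫ < 1}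

/-- The union of the hyperplanes of the Catalan arrangement. -/
def catHyperplanes (Φpos : Set V) : Set V :=
  ⋃ β ∈ Φpos, {v : V | ⟪v, β⟫ = -1 ∨ ⟪v, β⟫ = 0 ∨ ⟪v, β⟫ = 1}

theorem stmt17
    [FiniteDimensional ℝ V] {n : ℕ} (α : Fin n → V) (Φ Φpos : Finset V)
    (hind : LinearIndependent ℝ α)
    (hspan : Submodule.span ℝ (Set.range α) = ⊤)
    (hαΦ : ∀ i, α i ∈ Φ)
    (h0 : (0 : V) ∉ Φ)
    (hrefl : ∀ β ∈ Φ, ∀ γ ∈ Φ, γ - (2 * ⟪γ, β⟫ / ⟪β, β⟫) • β ∈ Φ)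
    (hmul : ∀ β ∈ Φ, ∀ t : ℝ, t • β ∈ Φ → t = 1 ∨ t = -1)
    (hpos : ∀ β : V, β ∈ Φpos ↔
      β ∈ Φ ∧ ∃ c : Fin n → ℝ, (∀ i, 0 ≤ c i) ∧ β = ∑ i, c i • α i)
    (hpm : ∀ β ∈ Φ, β ∈ Φpos ∨ -β ∈ Φpos)
    (Λ : Set V) (hΛpos : Λ ⊆ (↑Φpos : Set V)) (hA : RootAntichain α Λ)
    (hne : Λ.Nonempty)
    (hempty : ¬ ∃ v ∈ chamber α, ∀ β ∈ Λ, ⟪v, β⟫ = 1) :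
    ∃ I ⊆ (↑Φpos : Set V), IncreasingIn α ↑Φpos I ∧ regionOf α ↑Φpos I = ∅ := by
  classical
  by_contra hcon
  push_neg at hcon
  -- reflexivity and transitivity of the root order
  have rle_refl : ∀ a : V, rle α a a := fun a =>
    ⟨0, fun i => le_refl 0, by simp⟩
  have rle_trans : ∀ {a b c : V}, rle α a b → rle α b c → rle α a c := by
    rintro a b c ⟨p, hp, hpe⟩ ⟨q, hq, hqe⟩
    refine ⟨p + q, fun i => add_nonneg (hp i) (hq i), ?_⟩
    have : c - a = (b - a) + (c - b) := by abel
    rw [this, hpe, hqe, ← Finset.sum_add_distrib]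
    simp [add_smul]
  -- the filter generated by S ∩ Λ
  set ISet : Finset V → Set V :=
    fun S => {γ : V | γ ∈ Φpos ∧ ∃ β ∈ Λ, β ∈ S ∧ rle α β γ} with hISet
  have hIsub : ∀ S, ISet S ⊆ (↑Φpos : Set V) := fun S γ hγ => hγ.1
  have hIinc : ∀ S, IncreasingIn α (↑Φpos) (ISet S) := by
    rintro S β ⟨hβp, β', hβ'Λ, hβ'S, hβ'β⟩ γ hγ hβγ
    exact ⟨hγ, β', hβ'Λ, hβ'S, rle_trans hβ'β hβγ⟩
  have hreg : ∀ S, (regionOf α (↑Φpos) (ISet S)).Nonempty := fun S =>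
    (hcon (ISet S) (hIsub S)) (hIinc S)
  choose vv hvv using hreg
  have hch : ∀ S, vv S ∈ chamber α := fun S => (hvv S).1
  have hgt : ∀ (S) (β), β ∈ Λ → β ∈ S → 1 < ⟪vv S, β⟫ := by
    intro S β hβΛ hβS
    exact (hvv S).2.1 β ⟨Finset.mem_coe.1 (hΛpos hβΛ), β, hβΛ, hβS, rle_refl β⟩
  have hlt : ∀ (S) (β), β ∈ Λ → β ∉ S → ⟪vv S, β⟫ < 1 := by
    intro S β hβΛ hβS
    refine (hvv S).2.2 β ⟨hΛpos hβΛ, ?_⟩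
    rintro ⟨-, β', hβ'Λ, hβ'S, hle⟩
    exact hβS ((hA β' hβ'Λ β hβΛ (Or.inl hle)) ▸ hβ'S)
  -- Λ as a Finset
  set ΛF : Finset V := Φpos.filter (· ∈ Λ) with hΛF
  have hΛFmem : ∀ β, β ∈ ΛF ↔ β ∈ Λ := fun β => by
    constructor
    · intro h; exact (Finset.mem_filter.1 h).2
    · intro h; exact Finset.mem_filter.2 ⟨Finset.mem_coe.1 (hΛpos h), h⟩
  -- the evaluation map
  set T : V →ₗ[ℝ] ({x // x ∈ ΛF} → ℝ) :=
    { toFun := fun w i => ⟪w, (i : V)⟫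
      map_add' := fun x y => funext fun i => inner_add_left x y (i : V)
      map_smul' := fun r x => funext fun i => real_inner_smul_left x (i : V) r }
    with hT
  set W : Set V := vv '' ↑(ΛF.powerset) with hW
  set P : Set ({x // x ∈ ΛF} → ℝ) := T '' W with hP
  have hPfin : P.Finite := ((ΛF.powerset.finite_toSet).image vv).image T
  -- the all-ones vector is in the convex hull of P
  have hone : (fun _ => (1 : ℝ)) ∈ convexHull ℝ P := by
    by_contra honep
    obtain ⟨f, u, hfu, huf⟩ :=
      geometric_hahn_banach_closed_point (convex_convexHull ℝ P)
        ((hPfin.isCompact_convexHull (𝕜 := ℝ)).isClosed) honep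
    set lam : {x // x ∈ ΛF} → ℝ :=
      fun i => f (fun j => if i = j then (1 : ℝ) else 0) with hlam
    have hf : ∀ x : {x // x ∈ ΛF} → ℝ, f x = ∑ i, x i * lam i := by
      intro x
      conv_lhs => rw [pi_eq_sum_univ x, map_sum]
      refine Finset.sum_congr rfl fun i _ => ?_
      rw [map_smul]
      simp [hlam]
    set S₀ : Finset V := ΛF.filter (fun β => ∃ h : β ∈ ΛF, 0 < lam ⟨β, h⟩) with hS₀
    have hS₀P : T (vv S₀) ∈ P :=
      ⟨vv S₀, ⟨S₀, Finset.mem_coe.2 (Finset.mem_powerset.2 (Finset.filter_subset _ _)), rfl⟩, rfl⟩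
    have hle1 : f (fun _ => (1 : ℝ)) ≤ f (T (vv S₀)) := by
      rw [hf, hf]
      refine Finset.sum_le_sum fun i _ => ?_
      have hiΛ : (i : V) ∈ Λ := (hΛFmem _).1 i.2
      rcases lt_trichotomy (lam i) 0 with hneg | hzero | hpos
      · have hiS : (i : V) ∉ S₀ := by
          intro hmem
          obtain ⟨-, h', hpos'⟩ := Finset.mem_filter.1 hmem
          have : (⟨(i : V), h'⟩ : {x // x ∈ ΛF}) = i := Subtype.ext rfl
          rw [this] at hpos'
          exact absurd hneg (not_lt.2 hpos'.le)
        have h1 : T (vv S₀) i ≤ 1 := (hlt S₀ (i : V) hiΛ hiS).le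
        calc (fun _ => (1:ℝ)) i * lam i = 1 * lam i := rfl
          _ ≤ T (vv S₀) i * lam i := mul_le_mul_of_nonpos_right h1 hneg.le
      · simp [hzero]
      · have hiS : (i : V) ∈ S₀ := Finset.mem_filter.2 ⟨i.2, i.2, by
          have : (⟨(i : V), i.2⟩ : {x // x ∈ ΛF}) = i := Subtype.ext rfl
          rw [this]; exact hpos⟩
        have h1 : 1 ≤ T (vv S₀) i := (hgt S₀ (i : V) hiΛ hiS).le
        calc (fun _ => (1:ℝ)) i * lam i = 1 * lam i := rfl
          _ ≤ T (vv S₀) i * lam i := mul_le_mul_of_nonneg_right h1 hpos.le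
    have := hfu _ (subset_convexHull ℝ P hS₀P)
    linarith
  -- pull back: get a chamber point with all inner products 1
  rw [hP, ← T.image_convexHull] at hone
  obtain ⟨w, hwhull, hTw⟩ := hone
  have hchconv : Convex ℝ (chamber α) := by
    have : chamber α = ⋂ i, {v : V | 0 < ⟪v, α i⟫} := by
      ext v; simp [chamber, Set.mem_iInter]
    rw [this]
    exact convex_iInter fun i =>
      convex_halfSpace_gt ⟨fun a b => inner_add_left a b (α i),
        fun r a => real_inner_smul_left a (α i) r⟩ 0
  have hWch : W ⊆ chamber α := by
    rintro - ⟨S, -, rfl⟩; exact hch S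
  have hwch : w ∈ chamber α := convexHull_min hWch hchconv hwhull
  refine hempty ⟨w, hwch, fun β hβ => ?_⟩
  have hβF : β ∈ ΛF := (hΛFmem β).2 hβ
  exact congrFun hTw ⟨β, hβF⟩
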